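/- Let f : ℂ → ℂ be holomorphic on an open set D with Im f(z) ≠ 0 and f'(z) ≠ 0 on D, and let W : D → ℂ be defined by W(z) = i·f'(z) / Im f(z), equivalently W(z) = 2 f'(z) / (conj(f(z)) - f(z)). Then W satisfies the PDE ∂W/∂z̄ = (1/2)|W|², where ∂/∂z̄ = (1/2)(∂/∂x + i ∂/∂y) and z = x + iy. -/

import Mathlib

/-- The Wirtinger derivative `∂W/∂z̄ = (1/2)(∂_x + i ∂_y) W`. -/
noncomputable def wirtingerZbar (W : ℂ → ℂ) (z : ℂ) : ℂ :=
  (1 / 2 : ℂ) * (fderiv ℝ W z 1 + Complex.I * fderiv ℝ W z Complex.I)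

/-- If `f` is holomorphic on an open set `D` with `Im f ≠ 0` and `f' ≠ 0`, then
`W = i f' / Im f` (equivalently `2 f' / (conj f - f)`) solves
`∂W/∂z̄ = (1/2)|W|²`. -/
theorem stmt6 (D : Set ℂ) (hD : IsOpen D) (f : ℂ → ℂ)
    (hf : ∀ z ∈ D, DifferentiableAt ℂ f z)
    (him : ∀ z ∈ D, (f z).im ≠ 0)
    (hf' : ∀ z ∈ D, deriv f z ≠ 0) :
    let W : ℂ → ℂ := fun z => Complex.I * deriv f z / (((f z).im : ℝ) : ℂ)
    (∀ z ∈ D, W z = 2 * deriv f z / ((starRingEnd ℂ) (f z) - f z)) ∧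
    ∀ z ∈ D, wirtingerZbar W z = (1 / 2 : ℂ) * (Complex.normSq (W z) : ℝ) := by
  intro W
  have hAon : AnalyticOnNhd ℂ f D :=
    DifferentiableOn.analyticOnNhd (fun w hw => (hf w hw).differentiableWithinAt) hD
  constructor
  · intro z hz
    have hb : (((f z).im : ℝ) : ℂ) ≠ 0 := Complex.ofReal_ne_zero.2 (him z hz)
    have hconj : (starRingEnd ℂ) (f z) - f z = -((((2 * (f z).im : ℝ)) : ℂ) * Complex.I) := by
      rw [← Complex.sub_conj]; ring
    rw [hconj]
    push_cast
    field_simp [Complex.I_ne_zero]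
    ring_nf
    show Complex.I * deriv f z / _ * _ * Complex.I = _
    rw [div_mul_cancel₀ _ hb]
    linear_combination (deriv f z) * Complex.I_sq
  · intro z hz
    have hd' : HasDerivAt (deriv f) (deriv (deriv f) z) z :=
      ((hAon.deriv z hz).differentiableAt).hasDerivAt
    have hb : (((f z).im : ℝ) : ℂ) ≠ 0 := Complex.ofReal_ne_zero.2 (him z hz)
    set a := deriv f z with ha
    set c := deriv (deriv f) z with hc
    -- numerator
    have hN : HasFDerivAt (fun w => Complex.I * deriv f w)
        ((ContinuousLinearMap.smulRight (1 : ℂ →L[ℂ] ℂ) (Complex.I * c)).restrictScalars ℝ) z :=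
      ((hd'.const_mul Complex.I).hasFDerivAt).restrictScalars ℝ
    -- denominator
    have hfz : HasFDerivAt f
        ((ContinuousLinearMap.smulRight (1 : ℂ →L[ℂ] ℂ) a).restrictScalars ℝ) z :=
      ((hf z hz).hasDerivAt.hasFDerivAt).restrictScalars ℝ
    have hdd : HasFDerivAt (fun w => (((f w).im : ℝ) : ℂ))
        (Complex.ofRealCLM.comp (Complex.imCLM.comp
          ((ContinuousLinearMap.smulRight (1 : ℂ →L[ℂ] ℂ) a).restrictScalars ℝ))) z :=
      Complex.ofRealCLM.hasFDerivAt.comp z (Complex.imCLM.hasFDerivAt.comp z hfz)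
    have hinv : HasFDerivAt (fun y : ℂ => y⁻¹)
        ((ContinuousLinearMap.smulRight (1 : ℂ →L[ℂ] ℂ)
          (-((((f z).im : ℝ) : ℂ) ^ 2)⁻¹)).restrictScalars ℝ) ((((f z).im : ℝ) : ℂ)) :=
      ((hasDerivAt_inv hb).hasFDerivAt).restrictScalars ℝ
    have hdinv : HasFDerivAt (fun w => ((((f w).im : ℝ) : ℂ))⁻¹)
        (((ContinuousLinearMap.smulRight (1 : ℂ →L[ℂ] ℂ)
          (-((((f z).im : ℝ) : ℂ) ^ 2)⁻¹)).restrictScalars ℝ).comp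
          (Complex.ofRealCLM.comp (Complex.imCLM.comp
            ((ContinuousLinearMap.smulRight (1 : ℂ →L[ℂ] ℂ) a).restrictScalars ℝ)))) z :=
      hinv.comp z hdd
    have hWe : W = fun w => (Complex.I * deriv f w) * ((((f w).im : ℝ) : ℂ))⁻¹ :=
      funext fun w => div_eq_mul_inv _ _
    rw [wirtingerZbar, hWe, (HasFDerivAt.fderiv (f := fun w => Complex.I * deriv f w * ((((f w).im : ℝ) : ℂ))⁻¹) (hN.mul' hdinv))]
    simp only [ContinuousLinearMap.add_apply, ContinuousLinearMap.smul_apply,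
      ContinuousLinearMap.smulRight_apply, ContinuousLinearMap.coe_restrictScalars',
      ContinuousLinearMap.coe_comp', Function.comp_apply, ContinuousLinearMap.one_apply,
      Complex.ofRealCLM_apply, Complex.imCLM_apply, smul_eq_mul, one_mul, op_smul_eq_mul]
    simp only [Complex.mul_im, Complex.I_re, Complex.I_im, Complex.mul_re]
    show _ = (1 / 2 : ℂ) * (Complex.normSq (Complex.I * a / (((f z).im : ℝ) : ℂ)) : ℝ)
    rw [Complex.normSq_div, Complex.normSq_mul, Complex.normSq_I, Complex.normSq_apply,
      Complex.normSq_ofReal]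
    set b := (f z).im
    push_cast
    field_simp
    rw [Complex.ext_iff]
    constructor
    · simp only [Complex.mul_re, Complex.mul_im, Complex.add_re, Complex.add_im, Complex.I_re,
        Complex.I_im, Complex.ofReal_re, Complex.ofReal_im, ← Complex.ofReal_pow,
        Complex.neg_re, Complex.neg_im, Complex.inv_re, Complex.inv_im, Complex.zero_re, Complex.zero_im, ← ha]
      ring_nf
    · simp only [Complex.mul_re, Complex.mul_im, Complex.add_re, Complex.add_im, Complex.I_re,
        Complex.I_im, Complex.ofReal_re, Complex.ofReal_im, ← Complex.ofReal_pow,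
        Complex.neg_re, Complex.neg_im, Complex.zero_re, Complex.zero_im, ← ha]
      ring_nf
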